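/- arXiv:1612.03209 — 2 statements merged into one kernel-verified Lean document; each statement's English description precedes it below -/
import Mathlib

section
/- Let x, y ∈ (0, ∞) satisfy (x − 1)(y − 1) ≥ 0 and x + y > 1. Then ∫₀¹ (1 − t)^(x−1) · t^(y−1) dt ≤ 1 / (x + y − 1). -/
open MeasureTheory

lemma aux_int (c : ℝ) (hc : -1 < c) :
    ∫ t in Set.Ioo (0:ℝ) 1, t ^ c = 1 / (c + 1) := by
  rw [← integral_Ioc_eq_integral_Ioo, ← intervalIntegral.integral_of_le zero_le_one,
    integral_rpow (Or.inl hc), Real.one_rpow, Real.zero_rpow (by linarith)]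
  ring

lemma aux_integrable (c : ℝ) (hc : -1 < c) :
    MeasureTheory.IntegrableOn (fun t : ℝ => t ^ c) (Set.Ioo 0 1) := by
  have h := intervalIntegral.intervalIntegrable_rpow' (a := (0:ℝ)) (b := 1) hc
  exact ((intervalIntegrable_iff_integrableOn_Ioc_of_le zero_le_one).mp h).mono_set
    Set.Ioo_subset_Ioc_self

lemma aux_int' (c : ℝ) (hc : -1 < c) :
    ∫ t in Set.Ioo (0:ℝ) 1, (1 - t) ^ c = 1 / (c + 1) := by
  rw [← integral_Ioc_eq_integral_Ioo, ← intervalIntegral.integral_of_le zero_le_one]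
  have h := intervalIntegral.integral_comp_sub_left (a := (0:ℝ)) (b := 1)
    (fun s : ℝ => s ^ c) 1
  simp only [sub_zero, sub_self] at h
  rw [h, intervalIntegral.integral_of_le zero_le_one, integral_Ioc_eq_integral_Ioo,
    aux_int c hc]

lemma aux_integrable' (c : ℝ) (hc : -1 < c) :
    MeasureTheory.IntegrableOn (fun t : ℝ => (1 - t) ^ c) (Set.Ioo 0 1) := by
  have h := (intervalIntegral.intervalIntegrable_rpow' (a := (0:ℝ)) (b := 1) hc).comp_sub_left 1
  simp only [sub_zero, sub_self] at h
  exact ((intervalIntegrable_iff_integrableOn_Ioc_of_le zero_le_one).mp h.symm).mono_set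
    Set.Ioo_subset_Ioc_self

/-- Beta function bound: for x, y > 0 with (x-1)(y-1) ≥ 0 and x + y > 1,
∫₀¹ (1-t)^(x-1) t^(y-1) dt ≤ 1/(x+y-1). -/
theorem stmt0 (x y : ℝ) (hx : 0 < x) (hy : 0 < y)
    (hsign : 0 ≤ (x - 1) * (y - 1)) (hsum : 1 < x + y) :
    ∫ t in Set.Ioo (0 : ℝ) 1, (1 - t) ^ (x - 1) * t ^ (y - 1) ≤ 1 / (x + y - 1) := by
  rcases eq_or_ne (x + y) 2 with h2 | h2
  · have hx1 : x = 1 := by nlinarith [sq_nonneg (x - 1)]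
    have hy1 : y = 1 := by linarith
    subst hx1; subst hy1
    simp only [sub_self, Real.rpow_zero, one_mul]
    rw [MeasureTheory.setIntegral_const]
    simp [Real.volume_Ioo]
  · set c : ℝ := x + y - 2 with hc
    have hc0 : c ≠ 0 := fun h => h2 (by linarith [h, hc])
    have hc1 : (-1 : ℝ) < c := by simp only [hc]; linarith
    have hca : c * ((x - 1) / c) = x - 1 := by field_simp
    have hcb : c * ((y - 1) / c) = y - 1 := by field_simp
    have keyx : 0 ≤ (x - 1) * c := by nlinarith [sq_nonneg (x - 1)]
    have keyy : 0 ≤ (y - 1) * c := by nlinarith [sq_nonneg (y - 1)]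
    have hwa : 0 ≤ (x - 1) / c := by
      have h1 : (x - 1) / c = (x - 1) * c / c ^ 2 := by field_simp
      rw [h1]; exact div_nonneg keyx (sq_nonneg c)
    have hwb : 0 ≤ (y - 1) / c := by
      have h1 : (y - 1) / c = (y - 1) * c / c ^ 2 := by field_simp
      rw [h1]; exact div_nonneg keyy (sq_nonneg c)
    have hsum' : (x - 1) / c + (y - 1) / c = 1 := by
      rw [← add_div, div_eq_one_iff_eq hc0]; ring
    have hbnd : ∀ t ∈ Set.Ioo (0:ℝ) 1,
        (1 - t) ^ (x - 1) * t ^ (y - 1) ≤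
          (x - 1) / c * (1 - t) ^ c + (y - 1) / c * t ^ c := by
      intro t ht
      obtain ⟨ht0, ht1⟩ := ht
      have h1t : (0:ℝ) < 1 - t := by linarith
      calc (1 - t) ^ (x - 1) * t ^ (y - 1)
          = ((1 - t) ^ c) ^ ((x - 1) / c) * (t ^ c) ^ ((y - 1) / c) := by
            rw [← Real.rpow_mul h1t.le, ← Real.rpow_mul ht0.le, hca, hcb]
        _ ≤ (x - 1) / c * (1 - t) ^ c + (y - 1) / c * t ^ c :=
            Real.geom_mean_le_arith_mean2_weighted hwa hwb
              (Real.rpow_nonneg h1t.le c) (Real.rpow_nonneg ht0.le c) hsum'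
    have hgi : IntegrableOn
        (fun t : ℝ => (x - 1) / c * (1 - t) ^ c + (y - 1) / c * t ^ c)
        (Set.Ioo 0 1) :=
      ((aux_integrable' c hc1).const_mul _).add ((aux_integrable c hc1).const_mul _)
    have hfm : AEStronglyMeasurable
        (fun t : ℝ => (1 - t) ^ (x - 1) * t ^ (y - 1))
        (volume.restrict (Set.Ioo (0:ℝ) 1)) := by
      apply ContinuousOn.aestronglyMeasurable _ measurableSet_Ioo
      apply ContinuousOn.mul
      · exact ((continuous_const.sub continuous_id).continuousOn).rpow_const
          fun t ht => Or.inl (by simp; intro h; simp [h] at ht; linarith [ht.2])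
      · exact continuousOn_id.rpow_const fun t ht => Or.inl (ne_of_gt ht.1)
    have hfi : IntegrableOn (fun t : ℝ => (1 - t) ^ (x - 1) * t ^ (y - 1))
        (Set.Ioo 0 1) := by
      apply MeasureTheory.Integrable.mono' hgi hfm
      filter_upwards [MeasureTheory.ae_restrict_mem measurableSet_Ioo] with t ht
      have h1t : (0:ℝ) < 1 - t := by linarith [ht.2]
      rw [Real.norm_eq_abs, abs_of_nonneg
        (mul_nonneg (Real.rpow_nonneg h1t.le _) (Real.rpow_nonneg ht.1.le _))]
      exact hbnd t ht
    calc ∫ t in Set.Ioo (0:ℝ) 1, (1 - t) ^ (x - 1) * t ^ (y - 1)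
        ≤ ∫ t in Set.Ioo (0:ℝ) 1, ((x - 1) / c * (1 - t) ^ c + (y - 1) / c * t ^ c) :=
          MeasureTheory.setIntegral_mono_on hfi hgi measurableSet_Ioo hbnd
      _ = (x - 1) / c * (1 / (c + 1)) + (y - 1) / c * (1 / (c + 1)) := by
          rw [MeasureTheory.integral_add ((aux_integrable' c hc1).const_mul _)
            ((aux_integrable c hc1).const_mul _),
            MeasureTheory.integral_const_mul, MeasureTheory.integral_const_mul,
            aux_int c hc1, aux_int' c hc1]
      _ = 1 / (x + y - 1) := by
          rw [← add_mul, hsum', one_mul]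
          simp only [hc]; ring
end

section
/- Let T ∈ (0, ∞), h ∈ (0, T], ρ ∈ (0, ∞), r ∈ [0, ∞), and δ ∈ [0, ∞), and set κ₀ = min{1, T} · (h/T)^(2r/(ρ + 6δ)). Then κ₀ ∈ (0, T] and max{ 4·κ₀^(ρ/2), 57·max{1, κ₀^(−3δ)}·h^r } ≤ 57 · h^(ρ·r/(ρ + 6δ)) / ( min{T, 1/T} )^(r + 3δ). -/
/-- Optimization over the mollification parameter κ₀ = min{1,T}·(h/T)^(2r/(ρ+6δ)):
κ₀ ∈ (0, T] and the maximum of the two error terms is bounded by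
57·h^(ρr/(ρ+6δ)) / (min{T, 1/T})^(r+3δ). -/
theorem stmt6 (T h ρ r δ : ℝ) (hT : 0 < T) (hh : h ∈ Set.Ioc (0 : ℝ) T)
    (hρ : 0 < ρ) (hr : 0 ≤ r) (hδ : 0 ≤ δ) :
    0 < min 1 T * (h / T) ^ (2 * r / (ρ + 6 * δ)) ∧
      min 1 T * (h / T) ^ (2 * r / (ρ + 6 * δ)) ≤ T ∧
      max (4 * (min 1 T * (h / T) ^ (2 * r / (ρ + 6 * δ))) ^ (ρ / 2))
          (57 * max 1 ((min 1 T * (h / T) ^ (2 * r / (ρ + 6 * δ))) ^ (-(3 * δ))) * h ^ r)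
        ≤ 57 * h ^ (ρ * r / (ρ + 6 * δ)) / (min T (1 / T)) ^ (r + 3 * δ) := by
  obtain ⟨hh0, hhT⟩ := hh
  have hs : (0:ℝ) < ρ + 6 * δ := by positivity
  have hq0 : 0 < h / T := div_pos hh0 hT
  have hq1 : h / T ≤ 1 := (div_le_one hT).2 hhT
  have he : 0 ≤ 2 * r / (ρ + 6 * δ) := by positivity
  have hqpos : 0 < (h / T) ^ (2 * r / (ρ + 6 * δ)) := Real.rpow_pos_of_pos hq0 _
  have hqle1 : (h / T) ^ (2 * r / (ρ + 6 * δ)) ≤ 1 := Real.rpow_le_one hq0.le hq1 he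
  have hμpos : (0:ℝ) < min 1 T := lt_min one_pos hT
  have hμ1 : min 1 T ≤ 1 := min_le_left _ _
  have hκpos : 0 < min 1 T * (h / T) ^ (2 * r / (ρ + 6 * δ)) := mul_pos hμpos hqpos
  have hκ1 : min 1 T * (h / T) ^ (2 * r / (ρ + 6 * δ)) ≤ 1 := by
    calc min 1 T * (h / T) ^ (2 * r / (ρ + 6 * δ)) ≤ 1 * 1 :=
      mul_le_mul hμ1 hqle1 hqpos.le one_pos.le
    _ = 1 := one_mul 1
  refine ⟨hκpos, ?_, ?_⟩
  · calc min 1 T * (h / T) ^ (2 * r / (ρ + 6 * δ)) ≤ T * 1 :=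
      mul_le_mul (min_le_right 1 T) hqle1 hqpos.le hT.le
    _ = T := mul_one T
  -- main bound
  have hmpos : (0:ℝ) < min T (1 / T) := lt_min hT (by positivity)
  have hα : 0 ≤ ρ * r / (ρ + 6 * δ) := by positivity
  have hβ : 0 ≤ 6 * δ * r / (ρ + 6 * δ) := by positivity
  have hα_le : ρ * r / (ρ + 6 * δ) ≤ r + 3 * δ := by
    rw [div_le_iff₀ hs]; nlinarith
  have hβ_le : 6 * δ * r / (ρ + 6 * δ) ≤ r + 3 * δ := by
    rw [div_le_iff₀ hs]; nlinarith
  have factA : (min T (1 / T)) ^ (r + 3 * δ) ≤ T ^ (ρ * r / (ρ + 6 * δ)) := by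
    rcases le_total T 1 with h1 | h1
    · have hm : min T (1 / T) = T := min_eq_left (le_trans h1 (one_le_one_div hT h1))
      rw [hm]
      exact Real.rpow_le_rpow_of_exponent_ge hT h1 hα_le
    · have hm : min T (1 / T) = 1 / T :=
        min_eq_right (le_trans ((div_le_one hT).2 h1) h1)
      rw [hm]
      have h2 : (1 / T) ^ (r + 3 * δ) ≤ 1 :=
        Real.rpow_le_one (by positivity) ((div_le_one hT).2 h1) (by positivity)
      have h3 : (1:ℝ) ≤ T ^ (ρ * r / (ρ + 6 * δ)) := by
        have := Real.rpow_le_rpow_of_exponent_le h1 hα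
        rwa [Real.rpow_zero] at this
      linarith
  have factB : (min 1 T) ^ (-(3 * δ)) * T ^ (6 * δ * r / (ρ + 6 * δ))
      ≤ (min T (1 / T)) ^ (-(r + 3 * δ)) := by
    rcases le_total T 1 with h1 | h1
    · have hm : min T (1 / T) = T := min_eq_left (le_trans h1 (one_le_one_div hT h1))
      have hμ : min 1 T = T := min_eq_right h1
      rw [hm, hμ, ← Real.rpow_add hT]
      exact Real.rpow_le_rpow_of_exponent_ge hT h1 (by linarith)
    · have hm : min T (1 / T) = 1 / T :=
        min_eq_right (le_trans ((div_le_one hT).2 h1) h1)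
      have hμ : min 1 T = 1 := min_eq_left h1
      rw [hm, hμ, Real.one_rpow, one_mul, one_div, Real.inv_rpow hT.le,
        Real.rpow_neg hT.le, inv_inv]
      exact Real.rpow_le_rpow_of_exponent_le h1 hβ_le
  rw [max_le_iff]
  constructor
  · -- term 1
    have key : (min 1 T * (h / T) ^ (2 * r / (ρ + 6 * δ))) ^ (ρ / 2)
        ≤ h ^ (ρ * r / (ρ + 6 * δ)) / T ^ (ρ * r / (ρ + 6 * δ)) := by
      rw [Real.mul_rpow hμpos.le hqpos.le, ← Real.rpow_mul hq0.le]
      have hexp : 2 * r / (ρ + 6 * δ) * (ρ / 2) = ρ * r / (ρ + 6 * δ) := by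
        field_simp
      rw [hexp, Real.div_rpow hh0.le hT.le]
      have h4 : (min 1 T) ^ (ρ / 2) ≤ 1 :=
        Real.rpow_le_one hμpos.le hμ1 (by positivity)
      calc (min 1 T) ^ (ρ / 2) * (h ^ (ρ * r / (ρ + 6 * δ)) / T ^ (ρ * r / (ρ + 6 * δ)))
          ≤ 1 * (h ^ (ρ * r / (ρ + 6 * δ)) / T ^ (ρ * r / (ρ + 6 * δ))) :=
            mul_le_mul_of_nonneg_right h4 (by positivity)
        _ = _ := one_mul _
    calc 4 * (min 1 T * (h / T) ^ (2 * r / (ρ + 6 * δ))) ^ (ρ / 2)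
        ≤ 4 * (h ^ (ρ * r / (ρ + 6 * δ)) / T ^ (ρ * r / (ρ + 6 * δ))) :=
          mul_le_mul_of_nonneg_left key (by norm_num)
      _ = 4 * h ^ (ρ * r / (ρ + 6 * δ)) / T ^ (ρ * r / (ρ + 6 * δ)) := by ring
      _ ≤ 57 * h ^ (ρ * r / (ρ + 6 * δ)) / (min T (1 / T)) ^ (r + 3 * δ) := by
          apply div_le_div₀ (by positivity) ?_ (by positivity) factA
          have := Real.rpow_pos_of_pos hh0 (ρ * r / (ρ + 6 * δ))
          nlinarith
  · -- term 2
    have h1κ : 1 ≤ (min 1 T * (h / T) ^ (2 * r / (ρ + 6 * δ))) ^ (-(3 * δ)) :=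
      Real.one_le_rpow_of_pos_of_le_one_of_nonpos hκpos hκ1 (neg_nonpos.2 (by positivity))
    rw [max_eq_right h1κ]
    rw [Real.mul_rpow hμpos.le hqpos.le, ← Real.rpow_mul hq0.le]
    have hexp2 : 2 * r / (ρ + 6 * δ) * (-(3 * δ)) = -(6 * δ * r / (ρ + 6 * δ)) := by
      field_simp
      ring
    rw [hexp2, Real.rpow_neg hq0.le, Real.div_rpow hh0.le hT.le, inv_div]
    have hhr : h ^ r = h ^ (ρ * r / (ρ + 6 * δ)) * h ^ (6 * δ * r / (ρ + 6 * δ)) := by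
      rw [← Real.rpow_add hh0]
      congr 1
      field_simp
    rw [hhr, show 57 * h ^ (ρ * r / (ρ + 6 * δ)) / (min T (1 / T)) ^ (r + 3 * δ)
        = 57 * h ^ (ρ * r / (ρ + 6 * δ)) * (min T (1 / T)) ^ (-(r + 3 * δ)) from by
      rw [Real.rpow_neg hmpos.le, div_eq_mul_inv]]
    have hTb := Real.rpow_pos_of_pos hT (6 * δ * r / (ρ + 6 * δ))
    have hhb := Real.rpow_pos_of_pos hh0 (6 * δ * r / (ρ + 6 * δ))
    have heq : 57 * ((min 1 T) ^ (-(3 * δ)) *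
        (T ^ (6 * δ * r / (ρ + 6 * δ)) / h ^ (6 * δ * r / (ρ + 6 * δ)))) *
        (h ^ (ρ * r / (ρ + 6 * δ)) * h ^ (6 * δ * r / (ρ + 6 * δ)))
        = 57 * h ^ (ρ * r / (ρ + 6 * δ)) *
          ((min 1 T) ^ (-(3 * δ)) * T ^ (6 * δ * r / (ρ + 6 * δ))) := by
      field_simp
    rw [heq]
    exact mul_le_mul_of_nonneg_left factB (by positivity)
end
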